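/- arXiv:0903.2899 — 5 statements merged into one kernel-verified Lean document; each statement's English description precedes it below -/
import Mathlib

section
/- For any quaternion ι with ι² = -1, one has i·((i - ι i ι)/2) + j·((j - ι j ι)/2) + k·((k - ι k ι)/2) = -1, where i, j, k are the standard quaternion units. -/
noncomputable section
open Quaternion

/-- The standard quaternion units. -/
def qi : ℍ[ℝ] := ⟨0, 1, 0, 0⟩
def qj : ℍ[ℝ] := ⟨0, 0, 1, 0⟩
def qk : ℍ[ℝ] := ⟨0, 0, 0, 1⟩

theorem stmt_0 (ι : ℍ[ℝ]) (hι : ι ^ 2 = -1) :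
    qi * ((qi - ι * qi * ι) / 2) + qj * ((qj - ι * qj * ι) / 2)
      + qk * ((qk - ι * qk * ι) / 2) = -1 := by
  have hc2 : (2:ℍ[ℝ]) = ((2:ℝ):ℍ[ℝ]) := by exact_mod_cast rfl
  rw [← mul_div_assoc, ← mul_div_assoc, ← mul_div_assoc, ← add_div, ← add_div,
    div_eq_iff (by rw [hc2]; exact fun h => (two_ne_zero : (2:ℝ) ≠ 0) (Quaternion.coe_injective h))]
  rw [hc2]
  rw [Quaternion.ext_iff] at hι ⊢
  simp only [pow_two, Quaternion.re_mul, Quaternion.imI_mul, Quaternion.imJ_mul,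
    Quaternion.imK_mul, Quaternion.re_neg, Quaternion.imI_neg, Quaternion.imJ_neg,
    Quaternion.imK_neg, Quaternion.re_one, Quaternion.imI_one, Quaternion.imJ_one,
    Quaternion.imK_one, Quaternion.re_add, Quaternion.imI_add,
    Quaternion.imJ_add, Quaternion.imK_add, Quaternion.re_sub, Quaternion.imI_sub,
    Quaternion.imJ_sub, Quaternion.imK_sub, Quaternion.re_coe, Quaternion.imI_coe, Quaternion.imJ_coe, Quaternion.imK_coe] at hι ⊢
  obtain ⟨a, b, c, d⟩ := ι
  simp only [qi, qj, qk] at ⊢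
  dsimp only at hι ⊢
  obtain ⟨h1, h2, h3, h4⟩ := hι
  norm_num
  have hb : a * b = 0 := by linear_combination h2 / 2
  have hcc : a * c = 0 := by linear_combination h3 / 2
  have hd : a * d = 0 := by linear_combination h4 / 2
  have h5 : a * a * a + a = 0 := by linear_combination a * h1 + b * hb + c * hcc + d * hd
  have ha2 : a * a = 0 := by nlinarith [mul_self_nonneg (a * a), mul_self_nonneg a, h5]
  have ha : a = 0 := mul_self_eq_zero.mp ha2
  subst ha
  refine ⟨?_, ?_, ?_, ?_⟩ <;> ring_nf <;> linarith [h1]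
end
end

section
/- Suppose f : ℍ → ℍ is ℝ-differentiable at a non-real point q with ι = Im(q)/|Im(q)|, and f satisfies ∂f/∂x = ((i - ι i ι)/2) ∂f/∂t - ((i + ι i ι)/4) Df, and the analogous equations for y (with j) and z (with k), where Df = ∂f/∂t + i ∂f/∂x + j ∂f/∂y + k ∂f/∂z. Then for every h ∈ ℍ, the Fréchet derivative satisfies M_f h = h∥ · (∂f/∂t) + h⊥ · (-½ Df), where h∥ = (h - ι h ι)/2 and h⊥ = (h + ι h ι)/2. -/
noncomputable section
open Quaternion Filter Topology

private lemma half' (X : ℍ[ℝ]) : X/2 = ((2:ℝ)⁻¹) • X := by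
  have h2 : (2:ℍ[ℝ]) = ((2:ℝ):ℍ[ℝ]) := by norm_cast
  rw [div_eq_mul_inv, h2, ← Quaternion.coe_inv, Quaternion.mul_coe_eq_smul]

private lemma quarter' (X : ℍ[ℝ]) : X/4 = ((4:ℝ)⁻¹) • X := by
  have h4 : (4:ℍ[ℝ]) = ((4:ℝ):ℍ[ℝ]) := by norm_cast
  rw [div_eq_mul_inv, h4, ← Quaternion.coe_inv, Quaternion.mul_coe_eq_smul]

private lemma halfneg (X D : ℍ[ℝ]) : (X/2)*(-(D/2)) = -((X/4)*D) := by
  simp only [half', quarter', smul_mul_assoc, mul_neg, mul_smul_comm, smul_smul, neg_smul]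
  norm_num

private lemma sdiv' (r : ℝ) (x : ℍ[ℝ]) (c : ℍ[ℝ]) : (r•x)/c = r•(x/c) := by
  simp [div_eq_mul_inv, smul_mul_assoc]

private lemma lin' (ι pdt Df : ℍ[ℝ]) (r : ℝ) (a b : ℍ[ℝ]) :
    ((b + r•a - ι*(b + r•a)*ι)/2)*pdt + ((b + r•a + ι*(b + r•a)*ι)/2)*(-(Df/2))
    = (((b - ι*b*ι)/2)*pdt + ((b + ι*b*ι)/2)*(-(Df/2)))
      + r • (((a - ι*a*ι)/2)*pdt + ((a + ι*a*ι)/2)*(-(Df/2))) := by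
  simp only [mul_add, add_mul, sub_mul, mul_smul_comm, smul_mul_assoc, add_div, sub_div,
    smul_add, smul_sub, sdiv']
  abel

private lemma linS (ι pdt Df : ℍ[ℝ]) (r : ℝ) (a : ℍ[ℝ]) :
    ((r•a - ι*(r•a)*ι)/2)*pdt + ((r•a + ι*(r•a)*ι)/2)*(-(Df/2))
    = r • (((a - ι*a*ι)/2)*pdt + ((a + ι*a*ι)/2)*(-(Df/2))) := by
  simp only [mul_add, add_mul, sub_mul, mul_smul_comm, smul_mul_assoc, add_div, sub_div,
    smul_add, smul_sub, sdiv']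

set_option maxHeartbeats 2000000 in
theorem stmt_14 (f : ℍ[ℝ] → ℍ[ℝ]) (q : ℍ[ℝ]) (hq : q.im ≠ 0)
    (hdiff : DifferentiableAt ℝ f q)
    (ι : ℍ[ℝ]) (hι : ι = ((‖q.im‖)⁻¹ : ℝ) • q.im)
    (pdt pdx pdy pdz Df : ℍ[ℝ])
    (hpdt : pdt = fderiv ℝ f q 1) (hpdx : pdx = fderiv ℝ f q qi)
    (hpdy : pdy = fderiv ℝ f q qj) (hpdz : pdz = fderiv ℝ f q qk)
    (hDf : Df = pdt + qi * pdx + qj * pdy + qk * pdz)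
    (hx : pdx = ((qi - ι * qi * ι) / 2) * pdt - ((qi + ι * qi * ι) / 4) * Df)
    (hy : pdy = ((qj - ι * qj * ι) / 2) * pdt - ((qj + ι * qj * ι) / 4) * Df)
    (hz : pdz = ((qk - ι * qk * ι) / 2) * pdt - ((qk + ι * qk * ι) / 4) * Df) :
    ∀ h : ℍ[ℝ], fderiv ℝ f q h
      = ((h - ι * h * ι) / 2) * pdt + ((h + ι * h * ι) / 2) * (-(Df / 2)) := by
  -- ι is a unit purely imaginary quaternion, hence ι² = -1
  have hre : ι.re = 0 := by simp [hι]
  have hn : ‖ι‖ = 1 := by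
    rw [hι, norm_smul]
    simp [norm_inv, inv_mul_cancel₀ (norm_ne_zero_iff.mpr hq)]
  have hns : normSq ι = 1 := by
    have := Quaternion.normSq_eq_norm_mul_self (a := ι)
    rw [hn] at this; simpa using this
  have h1 : ι.re^2 + ι.imI^2 + ι.imJ^2 + ι.imK^2 = 1 := by
    rwa [← Quaternion.normSq_def']
  rw [hre] at h1
  have hii : ι * ι = -1 := by
    ext <;> simp [Quaternion.re_mul, Quaternion.imI_mul, Quaternion.imJ_mul,
      Quaternion.imK_mul, hre] <;> nlinarith [h1]
  -- values on the basis
  have e1 : ((1 - ι*(1:ℍ[ℝ])*ι)/2)*pdt + ((1 + ι*(1:ℍ[ℝ])*ι)/2)*(-(Df/2)) = pdt := by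
    rw [mul_one, hii]
    norm_num
    have h20 : (2:ℍ[ℝ]) ≠ 0 := by
      intro hc
      have h2c : (2:ℍ[ℝ]) = ((2:ℝ):ℍ[ℝ]) := by norm_cast
      rw [h2c] at hc
      rw [show ((0:ℍ[ℝ]) = ((0:ℝ):ℍ[ℝ])) by norm_cast] at hc
      exact (two_ne_zero (α := ℝ)) (Quaternion.coe_injective hc)
    rw [div_self h20, one_mul]
  have ei : ((qi - ι*qi*ι)/2)*pdt + ((qi + ι*qi*ι)/2)*(-(Df/2)) = pdx := by
    rw [halfneg, hx, ← sub_eq_add_neg]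
  have ej : ((qj - ι*qj*ι)/2)*pdt + ((qj + ι*qj*ι)/2)*(-(Df/2)) = pdy := by
    rw [halfneg, hy, ← sub_eq_add_neg]
  have ek : ((qk - ι*qk*ι)/2)*pdt + ((qk + ι*qk*ι)/2)*(-(Df/2)) = pdz := by
    rw [halfneg, hz, ← sub_eq_add_neg]
  intro h
  have hrep : h = h.re • 1 + h.imI • qi + h.imJ • qj + h.imK • qk := by
    ext <;> simp [Quaternion.re_smul, Quaternion.imI_smul, Quaternion.imJ_smul, Quaternion.imK_smul] <;> simp [qi, qj, qk]
  have hL : fderiv ℝ f q (h.re • 1 + h.imI • qi + h.imJ • qj + h.imK • qk)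
      = h.re • pdt + h.imI • pdx + h.imJ • pdy + h.imK • pdz := by
    rw [hpdt, hpdx, hpdy, hpdz]
    simp [map_add, map_smul]
  rw [hrep, hL]
  rw [lin' ι pdt Df h.imK qk (h.re • 1 + h.imI • qi + h.imJ • qj),
    lin' ι pdt Df h.imJ qj (h.re • 1 + h.imI • qi),
    lin' ι pdt Df h.imI qi (h.re • 1),
    linS ι pdt Df h.re 1, e1, ei, ej, ek]
end
end

section
/- If a quaternionic function f is S-derivable at a non-real point q (i.e., there exist B, C ∈ ℍ with lim_{h→0} h⁻¹(f(q+h) - f(q) - h∥B - h⊥C) = 0), then B = (∂f/∂t)(q). -/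
noncomputable section
open Quaternion Filter Topology

theorem stmt_15 (f : ℍ[ℝ] → ℍ[ℝ]) (q : ℍ[ℝ]) (hq : q.im ≠ 0)
    (hcont : ContinuousAt f q) (hdiff : DifferentiableAt ℝ f q)
    (ι : ℍ[ℝ]) (hι : ι = ((‖q.im‖)⁻¹ : ℝ) • q.im)
    (B C : ℍ[ℝ])
    (hS : Tendsto (fun h : ℍ[ℝ] =>
        h⁻¹ * (f (q + h) - f q - ((h - ι * h * ι) / 2) * B - ((h + ι * h * ι) / 2) * C))
      (𝓝[≠] 0) (𝓝 0)) :
    B = fderiv ℝ f q 1 := by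
  have hnorm : ‖q.im‖ ≠ 0 := norm_ne_zero_iff.mpr hq
  -- ι² = -1
  have hι2 : ι * ι = -1 := by
    have h1 : ι * ι = (‖q.im‖⁻¹ * ‖q.im‖⁻¹) • (q.im * q.im) := by
      rw [hι, smul_mul_smul_comm]
    have h2 : q.im * q.im = -((normSq q.im : ℝ) : ℍ[ℝ]) := by
      have hs := Quaternion.im_sq q
      rw [sq] at hs
      rw [hs]
    have h3 : (‖q.im‖⁻¹ * ‖q.im‖⁻¹) * (‖q.im‖ * ‖q.im‖) = 1 := by field_simp
    rw [h1, h2, Quaternion.normSq_eq_norm_mul_self, smul_neg,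
      ← Quaternion.coe_smul, smul_eq_mul, h3, Quaternion.coe_one]
  -- real h: ι h ι = -h
  have hreal : ∀ t : ℝ, ι * (t : ℍ[ℝ]) * ι = -(t : ℍ[ℝ]) := by
    intro t
    rw [mul_assoc, Quaternion.coe_commutes, ← mul_assoc, hι2, neg_one_mul]
  -- compose hS with coe : ℝ → ℍ
  have hcoe : Tendsto (fun t : ℝ => (t : ℍ[ℝ])) (𝓝[≠] (0:ℝ)) (𝓝[≠] (0:ℍ[ℝ])) := by
    apply tendsto_nhdsWithin_of_tendsto_nhds_of_eventually_within
    · have := Quaternion.continuous_coe.tendsto (0:ℝ)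
      simpa using this.mono_left nhdsWithin_le_nhds
    · filter_upwards [self_mem_nhdsWithin] with t ht
      simpa using Quaternion.coe_injective.ne ht
  have hS' : Tendsto (fun t : ℝ =>
      ((t : ℍ[ℝ]))⁻¹ * (f (q + t) - f q - (t : ℍ[ℝ]) * B)) (𝓝[≠] (0:ℝ)) (𝓝 0) := by
    have := hS.comp hcoe
    refine this.congr (fun t => ?_)
    have h2ne : (2:ℍ[ℝ]) ≠ 0 := by
      have := Quaternion.coe_injective.ne (show (2:ℝ) ≠ (0:ℝ) by norm_num)
      exact_mod_cast this
    have h3 : ((t:ℍ[ℝ]) - ι * t * ι) / 2 = (t:ℍ[ℝ]) := by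
      rw [hreal, sub_neg_eq_add, div_eq_iff h2ne, mul_two]
    have h4 : ((t:ℍ[ℝ]) + ι * t * ι) / 2 = 0 := by rw [hreal]; simp
    simp only [Function.comp, h3, h4, zero_mul, sub_zero]
  -- slope tends to B
  have hslopeB : Tendsto (fun t : ℝ => t⁻¹ • (f (q + t) - f q)) (𝓝[≠] (0:ℝ)) (𝓝 B) := by
    have h5 : Tendsto (fun t : ℝ =>
        ((t : ℍ[ℝ]))⁻¹ * (f (q + t) - f q - (t : ℍ[ℝ]) * B) + B) (𝓝[≠] (0:ℝ)) (𝓝 (0 + B)) :=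
      hS'.add tendsto_const_nhds
    rw [zero_add] at h5
    refine h5.congr' ?_
    filter_upwards [self_mem_nhdsWithin] with t ht
    have ht0 : t ≠ 0 := ht
    have ht' : (t : ℍ[ℝ]) ≠ 0 := by simpa using Quaternion.coe_injective.ne ht0
    rw [mul_sub, inv_mul_cancel_left₀ ht', sub_add_cancel, ← Quaternion.coe_inv,
      Quaternion.coe_mul_eq_smul]
  -- slope tends to fderiv f q 1
  have hderiv : HasDerivAt (fun t : ℝ => f (q + t)) (fderiv ℝ f q 1) 0 := by
    have hline : HasDerivAt (fun t : ℝ => q + (t : ℍ[ℝ])) 1 0 := by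
      have h6 : HasDerivAt (fun t : ℝ => (t : ℍ[ℝ])) 1 0 := by
        have h := (hasDerivAt_id (0:ℝ)).smul_const (1 : ℍ[ℝ])
        simp only [one_smul] at h
        have heq : (fun t : ℝ => (t:ℍ[ℝ])) = fun y : ℝ => y • (1:ℍ[ℝ]) := by
          funext t
          rw [← Quaternion.coe_one, Quaternion.smul_coe, mul_one]
        rw [heq]
        exact h
      simpa using h6.const_add q
    have hF : HasFDerivAt f (fderiv ℝ f q) ((fun t : ℝ => q + (t:ℍ[ℝ])) 0) := by
      simpa using hdiff.hasFDerivAt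
    have h7 := hF.comp_hasDerivAt 0 hline
    exact h7
  have hslopeL : Tendsto (fun t : ℝ => t⁻¹ • (f (q + t) - f q)) (𝓝[≠] (0:ℝ))
      (𝓝 (fderiv ℝ f q 1)) := by
    have h8 := hasDerivAt_iff_tendsto_slope.mp hderiv
    refine h8.congr (fun t => ?_)
    simp [slope_def_module]
  exact tendsto_nhds_unique hslopeB hslopeL
end
end

section
/- If f is S-derivable at a non-real point q with parallel derivative B = ∂f/∂t and perpendicular derivative C, then C = -½ Df(q), where Df = ∂f/∂t + i ∂f/∂x + j ∂f/∂y + k ∂f/∂z is the left Fueter operator. -/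
noncomputable section
open Quaternion Filter Topology

lemma coe_neg_two : (-2 : ℍ[ℝ]) = ((-2 : ℝ) : ℍ[ℝ]) := by
  have := Quaternion.coe_natCast (R := ℝ) 2
  push_cast at this ⊢
  rw [← this]

lemma coe_neg_four : (-4 : ℍ[ℝ]) = ((-4 : ℝ) : ℍ[ℝ]) := by
  have := Quaternion.coe_natCast (R := ℝ) 4
  push_cast at this ⊢
  rw [← this]

lemma coe_two : (2 : ℍ[ℝ]) = ((2 : ℝ) : ℍ[ℝ]) := by
  have := Quaternion.coe_natCast (R := ℝ) 2
  push_cast at this ⊢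
  rw [← this]

lemma half_mul (X Y : ℍ[ℝ]) : (X / 2) * Y = (2⁻¹ : ℝ) • (X * Y) := by
  rw [div_eq_mul_inv, coe_two, ← Quaternion.coe_inv, Quaternion.mul_coe_eq_smul,
    smul_mul_assoc]

lemma idA (ι : ℍ[ℝ]) (hre : ι.re = 0) (hsq : ι.imI^2 + ι.imJ^2 + ι.imK^2 = 1) :
    qi * (qi - ι * qi * ι) + qj * (qj - ι * qj * ι)
      + qk * (qk - ι * qk * ι) = (-2 : ℍ[ℝ]) := by
  rw [coe_neg_two]
  ext <;>
    simp only [Quaternion.re_mul, Quaternion.imI_mul, Quaternion.imJ_mul,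
      Quaternion.imK_mul, Quaternion.re_sub, Quaternion.imI_sub, Quaternion.imJ_sub,
      Quaternion.imK_sub, Quaternion.re_add, Quaternion.imI_add, Quaternion.imJ_add,
      Quaternion.imK_add, Quaternion.re_coe, Quaternion.imI_coe, Quaternion.imJ_coe,
      Quaternion.imK_coe, hre] <;>
    simp only [qi, qj, qk] <;>
    norm_num <;> nlinarith [hsq]

lemma idB (ι : ℍ[ℝ]) (hre : ι.re = 0) (hsq : ι.imI^2 + ι.imJ^2 + ι.imK^2 = 1) :
    qi * (qi + ι * qi * ι) + qj * (qj + ι * qj * ι)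
      + qk * (qk + ι * qk * ι) = (-4 : ℍ[ℝ]) := by
  rw [coe_neg_four]
  ext <;>
    simp only [Quaternion.re_mul, Quaternion.imI_mul, Quaternion.imJ_mul,
      Quaternion.imK_mul, Quaternion.re_sub, Quaternion.imI_sub, Quaternion.imJ_sub,
      Quaternion.imK_sub, Quaternion.re_add, Quaternion.imI_add, Quaternion.imJ_add,
      Quaternion.imK_add, Quaternion.re_coe, Quaternion.imI_coe, Quaternion.imJ_coe,
      Quaternion.imK_coe, hre] <;>
    simp only [qi, qj, qk] <;>
    norm_num <;> nlinarith [hsq]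

lemma qi_ne_zero : qi ≠ 0 := by
  intro h
  have := congrArg QuaternionAlgebra.imI h
  simp [qi] at this

lemma qj_ne_zero : qj ≠ 0 := by
  intro h
  have := congrArg QuaternionAlgebra.imJ h
  simp [qj] at this

lemma qk_ne_zero : qk ≠ 0 := by
  intro h
  have := congrArg QuaternionAlgebra.imK h
  simp [qk] at this

lemma combine (ι B C Di Dj Dk : ℍ[ℝ]) (hre : ι.re = 0)
    (hsq : ι.imI ^ 2 + ι.imJ ^ 2 + ι.imK ^ 2 = 1)
    (hi : Di = ((qi - ι * qi * ι) / 2) * B + ((qi + ι * qi * ι) / 2) * C)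
    (hj : Dj = ((qj - ι * qj * ι) / 2) * B + ((qj + ι * qj * ι) / 2) * C)
    (hk : Dk = ((qk - ι * qk * ι) / 2) * B + ((qk + ι * qk * ι) / 2) * C) :
    C = -((B + qi * Di + qj * Dj + qk * Dk) / 2) := by
  have main : B + qi * Di + qj * Dj + qk * Dk = (-2 : ℍ[ℝ]) * C := by
    calc B + qi * Di + qj * Dj + qk * Dk
        = B + (2⁻¹ : ℝ) • ((qi * (qi - ι * qi * ι) + qj * (qj - ι * qj * ι)
            + qk * (qk - ι * qk * ι)) * B)
          + (2⁻¹ : ℝ) • ((qi * (qi + ι * qi * ι) + qj * (qj + ι * qj * ι)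
            + qk * (qk + ι * qk * ι)) * C) := by
          rw [hi, hj, hk]
          simp only [half_mul, mul_add, mul_smul_comm, smul_add, add_mul, ← mul_assoc]
          abel
      _ = B + (2⁻¹ : ℝ) • ((-2 : ℍ[ℝ]) * B) + (2⁻¹ : ℝ) • ((-4 : ℍ[ℝ]) * C) := by
          rw [idA ι hre hsq, idB ι hre hsq]
      _ = (-2 : ℍ[ℝ]) * C := by
          have e1 : (2⁻¹ : ℝ) • ((-2 : ℍ[ℝ]) * B) = -B := by
            rw [coe_neg_two, Quaternion.coe_mul_eq_smul, smul_smul]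
            norm_num
          have e2 : (2⁻¹ : ℝ) • ((-4 : ℍ[ℝ]) * C) = (-2 : ℍ[ℝ]) * C := by
            rw [coe_neg_four, Quaternion.coe_mul_eq_smul, smul_smul, coe_neg_two,
              Quaternion.coe_mul_eq_smul]
            norm_num
          rw [e1, e2]
          abel
  rw [main]
  rw [coe_neg_two, Quaternion.coe_mul_eq_smul, div_eq_mul_inv, coe_two,
    ← Quaternion.coe_inv, Quaternion.mul_coe_eq_smul, smul_smul]
  norm_num

theorem stmt_16 (f : ℍ[ℝ] → ℍ[ℝ]) (q : ℍ[ℝ]) (hq : q.im ≠ 0)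
    (hdiff : ∀ᶠ p in 𝓝 q, DifferentiableAt ℝ f p)
    (hcont : ContinuousAt (fun p => fderiv ℝ f p) q)
    (ι : ℍ[ℝ]) (hι : ι = ((‖q.im‖)⁻¹ : ℝ) • q.im)
    (C : ℍ[ℝ])
    (hS : Tendsto (fun h : ℍ[ℝ] =>
        h⁻¹ * (f (q + h) - f q - ((h - ι * h * ι) / 2) * fderiv ℝ f q 1
          - ((h + ι * h * ι) / 2) * C))
      (𝓝[≠] 0) (𝓝 0)) :
    C = -((fderiv ℝ f q 1 + qi * fderiv ℝ f q qi + qj * fderiv ℝ f q qj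
        + qk * fderiv ℝ f q qk) / 2) := by
  set L := fderiv ℝ f q with hL
  set B := L 1 with hB
  -- Step A: little-o estimate from differentiability
  have hd : HasFDerivAt f L q := (hdiff.self_of_nhds).hasFDerivAt
  have hlo : (fun h : ℍ[ℝ] => f (q + h) - f q - L h) =o[𝓝 0] (fun h => h) :=
    hasFDerivAt_iff_isLittleO_nhds_zero.mp hd
  have hA : Tendsto (fun h : ℍ[ℝ] => h⁻¹ * (f (q + h) - f q - L h)) (𝓝[≠] 0) (𝓝 0) := by
    rw [tendsto_zero_iff_norm_tendsto_zero]
    have h1 : Tendsto (fun h : ℍ[ℝ] => ‖f (q + h) - f q - L h‖ / ‖h‖) (𝓝 0) (𝓝 0) :=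
      hlo.norm_norm.tendsto_div_nhds_zero
    refine ((h1.mono_left nhdsWithin_le_nhds).congr fun h => ?_)
    rw [norm_mul, norm_inv, div_eq_inv_mul]
  -- Step B: the purely linear expression tends to zero
  have hg : Tendsto (fun h : ℍ[ℝ] =>
      h⁻¹ * (L h - ((h - ι * h * ι) / 2) * B - ((h + ι * h * ι) / 2) * C))
      (𝓝[≠] 0) (𝓝 0) := by
    have h2 := hS.sub hA
    rw [sub_zero] at h2
    refine h2.congr fun h => ?_
    rw [← mul_sub]
    congr 1
    abel
  -- Step C/D: the linear identity at every nonzero point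
  have key0 : ∀ u : ℍ[ℝ], u ≠ 0 →
      L u - ((u - ι * u * ι) / 2) * B - ((u + ι * u * ι) / 2) * C = 0 := by
    intro u hu
    have hpath : Tendsto (fun t : ℝ => t • u) (𝓝[>] (0:ℝ)) (𝓝[≠] (0:ℍ[ℝ])) := by
      apply tendsto_nhdsWithin_of_tendsto_nhds_of_eventually_within
      · have : Tendsto (fun t : ℝ => t • u) (𝓝 (0:ℝ)) (𝓝 ((0:ℝ) • u)) :=
          (continuous_id.smul continuous_const).tendsto 0
        simpa using this.mono_left nhdsWithin_le_nhds
      · filter_upwards [self_mem_nhdsWithin] with t ht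
        exact smul_ne_zero (ne_of_gt ht) hu
    have hcomp := hg.comp hpath
    have hconst : (fun t : ℝ => ((t • u)⁻¹ *
        (L (t • u) - ((t • u - ι * (t • u) * ι) / 2) * B - ((t • u + ι * (t • u) * ι) / 2) * C)))
        =ᶠ[𝓝[>] (0:ℝ)]
        (fun _ => u⁻¹ * (L u - ((u - ι * u * ι) / 2) * B - ((u + ι * u * ι) / 2) * C)) := by
      filter_upwards [self_mem_nhdsWithin] with t ht
      have ht0 : (t:ℝ) ≠ 0 := ne_of_gt ht
      have hsm : (t • u : ℍ[ℝ]) = (t : ℍ[ℝ]) * u := (Quaternion.coe_mul_eq_smul t u).symm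
      rw [hsm]
      have hmapsmul : L ((t : ℍ[ℝ]) * u) = (t : ℍ[ℝ]) * L u := by
        rw [Quaternion.coe_mul_eq_smul, L.map_smul, Quaternion.coe_mul_eq_smul]
      rw [hmapsmul]
      have hcm : ι * ((t:ℍ[ℝ]) * u) * ι = (t:ℍ[ℝ]) * (ι * u * ι) := by
        rw [← mul_assoc, ← Quaternion.coe_commutes t ι, mul_assoc, mul_assoc, mul_assoc ι u ι]
      rw [hcm]
      have hdiv : ∀ X : ℍ[ℝ], ((t:ℍ[ℝ]) * X) / 2 = (t:ℍ[ℝ]) * (X / 2) := fun X => by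
        rw [mul_div_assoc]
      rw [← mul_sub (t:ℍ[ℝ]) u (ι * u * ι), ← mul_add (t:ℍ[ℝ]) u (ι * u * ι), hdiv, hdiv,
        mul_assoc (t:ℍ[ℝ]) ((u - ι * u * ι) / 2) B, mul_assoc (t:ℍ[ℝ]) ((u + ι * u * ι) / 2) C,
        ← mul_sub (t:ℍ[ℝ]), ← mul_sub (t:ℍ[ℝ]), mul_inv_rev, ← Quaternion.coe_inv,
        mul_assoc u⁻¹, ← mul_assoc ((t⁻¹ : ℝ) : ℍ[ℝ]), ← Quaternion.coe_mul,
        inv_mul_cancel₀ ht0]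
      simp
    have hlim : Tendsto (fun _ : ℝ =>
        u⁻¹ * (L u - ((u - ι * u * ι) / 2) * B - ((u + ι * u * ι) / 2) * C))
        (𝓝[>] (0:ℝ)) (𝓝 0) := hcomp.congr' hconst
    have h0 : u⁻¹ * (L u - ((u - ι * u * ι) / 2) * B - ((u + ι * u * ι) / 2) * C) = 0 :=
      tendsto_const_nhds_iff.mp hlim
    exact (mul_eq_zero.mp h0).resolve_left (inv_ne_zero hu)
  -- facts about ι
  have hnι : ‖ι‖ = 1 := by
    rw [hι, norm_smul]
    simp [norm_inv, inv_mul_cancel₀ (norm_ne_zero_iff.mpr hq)]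
  have hre : ι.re = 0 := by
    rw [hι]
    simp [Quaternion.re_smul]
  have hsq : ι.imI ^ 2 + ι.imJ ^ 2 + ι.imK ^ 2 = 1 := by
    have h1 : Quaternion.normSq ι = 1 := by
      rw [Quaternion.normSq_eq_norm_mul_self, hnι]; norm_num
    rw [Quaternion.normSq_def'] at h1
    rw [hre] at h1
    nlinarith [h1]
  -- the key equations at qi, qj, qk
  have ki := key0 qi qi_ne_zero
  have kj := key0 qj qj_ne_zero
  have kk := key0 qk qk_ne_zero
  rw [sub_sub, sub_eq_zero] at ki kj kk
  exact combine ι B C (L qi) (L qj) (L qk) hre hsq ki kj kk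
end
end

section
/- The function ι : ℍ \ ℝ → ℍ sending q = t + rI (r > 0, I² = -1) to I satisfies, at every non-real q, the slice equation (∂/∂t + ι ∂/∂r) ι = 0 (it is constant on each half-slice), and its perpendicular derivative equals 1/r, i.e., -½ Dι = 1/r where D is the left Fueter operator. -/
noncomputable section
open Quaternion Filter Topology
open scoped RealInnerProductSpace

/-- The map `q ↦ Im(q)/|Im(q)|`, sending a non-real quaternion `q = t + rI` to `I`. -/
def iotaF (q : ℍ[ℝ]) : ℍ[ℝ] := ((‖q.im‖)⁻¹ : ℝ) • q.im

lemma key (v u : ℍ) (hv : v ≠ 0) :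
    HasDerivAt (fun s : ℝ => (‖v + s • u‖)⁻¹ • (v + s • u))
      ((‖v‖)⁻¹ • u - ((⟪v, u⟫ / ‖v‖ ^ 3)) • v) 0 := by
  have hnv : ‖v‖ ≠ 0 := norm_ne_zero_iff.mpr hv
  have hw : HasDerivAt (fun s : ℝ => v + s • u) u 0 := by
    simpa using ((hasDerivAt_id (0 : ℝ)).smul_const u).const_add v
  have hin : HasDerivAt (fun s : ℝ => ⟪v + s • u, v + s • u⟫) (2 * ⟪v, u⟫) 0 := by
    have := hw.inner ℝ hw
    simp only [zero_smul, add_zero] at this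
    refine this.congr_deriv ?_
    rw [real_inner_comm v u]; ring
  have hsq : HasDerivAt Real.sqrt (1 / (2 * ‖v‖)) ((fun s : ℝ => ⟪v + s • u, v + s • u⟫) 0) := by
    have h := Real.hasDerivAt_sqrt (x := ⟪v, v⟫) (by rw [real_inner_self_eq_norm_sq]; positivity)
    rw [show Real.sqrt ⟪v, v⟫ = ‖v‖ by
      rw [real_inner_self_eq_norm_sq]; exact Real.sqrt_sq (norm_nonneg v)] at h
    simpa using h
  have hnorm : HasDerivAt (fun s : ℝ => ‖v + s • u‖) (⟪v, u⟫ / ‖v‖) 0 := by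
    have h := hsq.comp 0 hin
    have he : (fun s : ℝ => Real.sqrt ⟪v + s • u, v + s • u⟫) = fun s : ℝ => ‖v + s • u‖ := by
      funext s
      rw [real_inner_self_eq_norm_sq, Real.sqrt_sq (norm_nonneg _)]
    rw [show (Real.sqrt ∘ fun s : ℝ => ⟪v + s • u, v + s • u⟫) = fun s : ℝ => ‖v + s • u‖ from he] at h
    refine h.congr_deriv ?_
    field_simp
  have hinv : HasDerivAt (fun s : ℝ => (‖v + s • u‖)⁻¹) (-(⟪v, u⟫ / ‖v‖) / ‖v‖ ^ 2) 0 := by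
    have := hnorm.inv (by simpa using hnv)
    simp only [zero_smul, add_zero] at this
    exact this
  have hfin := hinv.smul hw
  simp only [zero_smul, add_zero] at hfin
  have hsc : -(⟪v, u⟫ / ‖v‖) / ‖v‖ ^ 2 = -(⟪v, u⟫ / ‖v‖ ^ 3) := by
    field_simp
  rw [sub_eq_add_neg, ← neg_smul, ← hsc]
  exact hfin

lemma deriv_dir (q d : ℍ[ℝ]) (hq : q.im ≠ 0) :
    deriv (fun s : ℝ => iotaF (q + (s : ℍ[ℝ]) * d)) 0
      = (‖q.im‖)⁻¹ • d.im - ((⟪q.im, d.im⟫ / ‖q.im‖ ^ 3)) • q.im := by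
  have : (fun s : ℝ => iotaF (q + (s : ℍ[ℝ]) * d)) =
      fun s : ℝ => (‖q.im + s • d.im‖)⁻¹ • (q.im + s • d.im) := by
    funext s
    simp [iotaF, Quaternion.coe_mul_eq_smul, Quaternion.im_add, Quaternion.im_smul]
  rw [this]
  exact (key q.im d.im hq).deriv

lemma deriv_one' (q : ℍ[ℝ]) :
    deriv (fun s : ℝ => iotaF (q + (s : ℍ[ℝ]))) 0 = 0 := by
  have : (fun s : ℝ => iotaF (q + (s : ℍ[ℝ]))) = fun _ => iotaF q := by
    funext s
    simp [iotaF, Quaternion.im_add, Quaternion.im_coe]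
  rw [this, deriv_const]

theorem stmt_19 (q : ℍ[ℝ]) (hq : q.im ≠ 0) :
    (deriv (fun s : ℝ => iotaF (q + (s : ℍ[ℝ]))) 0
        + iotaF q * deriv (fun s : ℝ => iotaF (q + (s : ℍ[ℝ]) * iotaF q)) 0 = 0) ∧
    -((deriv (fun s : ℝ => iotaF (q + (s : ℍ[ℝ]))) 0
        + qi * deriv (fun s : ℝ => iotaF (q + (s : ℍ[ℝ]) * qi)) 0
        + qj * deriv (fun s : ℝ => iotaF (q + (s : ℍ[ℝ]) * qj)) 0
        + qk * deriv (fun s : ℝ => iotaF (q + (s : ℍ[ℝ]) * qk)) 0) / 2)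
      = (((‖q.im‖)⁻¹ : ℝ) : ℍ[ℝ]) := by
  have hr : (0:ℝ) < ‖q.im‖ := norm_pos_iff.mpr hq
  have hrne : ‖q.im‖ ≠ 0 := ne_of_gt hr
  have hr2 : ‖q.im‖ ^ 2 = q.imI ^ 2 + q.imJ ^ 2 + q.imK ^ 2 := by
    rw [sq, ← Quaternion.normSq_eq_norm_mul_self]
    simp [Quaternion.normSq_def']
  constructor
  · rw [deriv_one', deriv_dir q _ hq]
    have him : (iotaF q).im = iotaF q := by simp [iotaF]
    rw [him]
    have hi : ⟪q.im, iotaF q⟫ = ‖q.im‖ := by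
      simp [iotaF, real_inner_smul_right, real_inner_self_eq_norm_sq]
      field_simp
    rw [hi]
    have : (‖q.im‖)⁻¹ • iotaF q - (‖q.im‖ / ‖q.im‖ ^ 3) • q.im = 0 := by
      simp only [iotaF, smul_smul]
      rw [sub_eq_zero]
      congr 1
      field_simp
    rw [this, mul_zero, zero_add]
  · rw [deriv_one', deriv_dir q _ hq, deriv_dir q _ hq, deriv_dir q _ hq]
    have hii : ⟪q.im, qi.im⟫ = q.imI := by simp [Quaternion.inner_def, Quaternion.re_mul]; simp [qi]
    have hij : ⟪q.im, qj.im⟫ = q.imJ := by simp [Quaternion.inner_def, Quaternion.re_mul]; simp [qj]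
    have hik : ⟪q.im, qk.im⟫ = q.imK := by simp [Quaternion.inner_def, Quaternion.re_mul]; simp [qk]
    rw [hii, hij, hik]
    have h2 : (2:ℍ[ℝ]) = ((2:ℝ):ℍ[ℝ]) := by
      rw [show (2:ℝ) = 1 + 1 by norm_num, Quaternion.coe_add, Quaternion.coe_one,
        one_add_one_eq_two]
    have h2ne : (2:ℍ[ℝ]) ≠ 0 := by
      rw [h2]
      intro h
      rw [← Quaternion.coe_zero, Quaternion.coe_inj] at h
      norm_num at h
    rw [← neg_div, div_eq_iff h2ne, h2]
    simp only [Quaternion.ext_iff, Quaternion.re_mul, Quaternion.imI_mul,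
      Quaternion.imJ_mul, Quaternion.imK_mul, Quaternion.re_add, Quaternion.imI_add,
      Quaternion.imJ_add, Quaternion.imK_add, Quaternion.re_sub, Quaternion.imI_sub,
      Quaternion.imJ_sub, Quaternion.imK_sub, Quaternion.re_neg, Quaternion.imI_neg,
      Quaternion.imJ_neg, Quaternion.imK_neg, Quaternion.re_smul, Quaternion.imI_smul,
      Quaternion.imJ_smul, Quaternion.imK_smul, Quaternion.re_zero, Quaternion.imI_zero,
      Quaternion.imJ_zero, Quaternion.imK_zero, Quaternion.re_coe, Quaternion.imI_coe,
      Quaternion.imJ_coe, Quaternion.imK_coe, Quaternion.re_im, Quaternion.imI_im,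
      Quaternion.imJ_im, Quaternion.imK_im, smul_eq_mul]
    simp only [qi, qj, qk]
    norm_num
    refine ⟨?_, ?_, ?_, ?_⟩ <;> field_simp <;> ring_nf <;> nlinarith [hr2]
end
end
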